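/- arXiv:2110.15572 — 6 statements merged into one kernel-verified Lean document; each statement's English description precedes it below -/
import Mathlib

section
/- Non-uniform Łojasiewicz inequality for the softmax expected reward: for every θ ∈ ℝ^K, the Euclidean norm of the gradient of θ ↦ π_θᵀ r satisfies ‖d(π_θᵀ r)/dθ‖₂ = (Σ_{a∈[K]} π_θ(a)²·(r(a) − π_θᵀ r)²)^{1/2} ≥ π_θ(a*)·(π* − π_θ)ᵀ r = π_θ(a*)·(r(a*) − π_θᵀ r). -/
open Finset Real Filter

/-- Softmax policy: `π_θ(a) = exp(θ(a)) / Σ_{a'} exp(θ(a'))`. -/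
noncomputable def softmax {K : ℕ} (θ : Fin K → ℝ) (a : Fin K) : ℝ :=
  Real.exp (θ a) / ∑ a', Real.exp (θ a')

/-- Expected reward `π_θᵀ r`. -/
noncomputable def expReward {K : ℕ} (r θ : Fin K → ℝ) : ℝ :=
  ∑ a, softmax θ a * r a

/-- Policy gradient component `(d π_θᵀ r / dθ)(a) = π_θ(a)·(r(a) − π_θᵀ r)`. -/
noncomputable def pgrad {K : ℕ} (r θ : Fin K → ℝ) (a : Fin K) : ℝ :=
  softmax θ a * (r a - expReward r θ)

/-- Euclidean norm of the policy gradient. -/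
noncomputable def pgradNorm {K : ℕ} (r θ : Fin K → ℝ) : ℝ :=
  Real.sqrt (∑ a, pgrad r θ a ^ 2)

/-- Non-uniform Łojasiewicz inequality for the softmax expected reward:
`‖d(π_θᵀ r)/dθ‖₂ ≥ π_θ(a*)·(r(a*) − π_θᵀ r)`. -/
theorem softmax_pg_nonuniform_lojasiewicz
    {K : ℕ} (hK : 2 ≤ K) (r : Fin K → ℝ)
    (hr : ∀ a, 0 < r a ∧ r a ≤ 1)
    (astar : Fin K) (hstar : ∀ a, a ≠ astar → r a < r astar)
    (θ : Fin K → ℝ) :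
    softmax θ astar * (r astar - expReward r θ) ≤ pgradNorm r θ := by
  have h1 : pgrad r θ astar ≤ |pgrad r θ astar| := le_abs_self _
  have h2 : |pgrad r θ astar| = Real.sqrt (pgrad r θ astar ^ 2) :=
    (Real.sqrt_sq_eq_abs _).symm
  have h3 : pgrad r θ astar ^ 2 ≤ ∑ a, pgrad r θ a ^ 2 :=
    Finset.single_le_sum (f := fun a => pgrad r θ a ^ 2) (fun a _ => sq_nonneg _) (Finset.mem_univ astar)
  calc softmax θ astar * (r astar - expReward r θ) = pgrad r θ astar := rfl
    _ ≤ Real.sqrt (pgrad r θ astar ^ 2) := h2 ▸ h1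
    _ ≤ pgradNorm r θ := Real.sqrt_le_sqrt h3
end

section
/- Natural non-uniform Łojasiewicz inequality (continuous form): for every θ ∈ ℝ^K, ⟨d(π_θᵀ r)/dθ, r⟩ = rᵀ(diag(π_θ) − π_θ π_θᵀ) r ≥ π_θ(a*)·Δ·(π* − π_θ)ᵀ r. -/
open Finset Real Filter

/-- Natural non-uniform Łojasiewicz inequality (continuous form):
`⟨d(π_θᵀ r)/dθ, r⟩ ≥ π_θ(a*)·Δ·(r(a*) − π_θᵀ r)`,
where `Δ = r(a*) − max_{a ≠ a*} r(a)` is the reward gap. -/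
theorem natural_nonuniform_lojasiewicz_continuous
    {K : ℕ} (hK : 2 ≤ K) (r : Fin K → ℝ)
    (hr : ∀ a, 0 < r a ∧ r a ≤ 1)
    (astar : Fin K) (hstar : ∀ a, a ≠ astar → r a < r astar)
    (Δ : ℝ) (hΔ : Δ = r astar - sSup (r '' {a | a ≠ astar}))
    (θ : Fin K → ℝ) :
    softmax θ astar * Δ * (r astar - expReward r θ) ≤ ∑ a, pgrad r θ a * r a := by
  set p : Fin K → ℝ := softmax θ with hp_def
  set μ : ℝ := expReward r θ with hμ_def
  -- positivity and normalization of softmax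
  have hspos : 0 < ∑ a', Real.exp (θ a') :=
    Finset.sum_pos (fun a' _ => Real.exp_pos _) ⟨astar, Finset.mem_univ astar⟩
  have hppos : ∀ a, 0 < p a := fun a => div_pos (Real.exp_pos _) hspos
  have hpsum : ∑ a, p a = 1 := by
    simp only [hp_def, softmax, ← Finset.sum_div]
    exact div_self (ne_of_gt hspos)
  have hμeq : μ = ∑ a, p a * r a := rfl
  -- Δ facts
  have hne : ({a : Fin K | a ≠ astar}).Nonempty := by
    obtain ⟨b, hb⟩ := Fintype.exists_ne_of_one_lt_card (by simp; omega) astar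
    exact ⟨b, hb⟩
  have hfin : (r '' {a | a ≠ astar}).Finite := (Set.toFinite _).image r
  have hΔle : ∀ b, b ≠ astar → Δ ≤ r astar - r b := by
    intro b hb
    have : r b ≤ sSup (r '' {a | a ≠ astar}) :=
      le_csSup hfin.bddAbove ⟨b, hb, rfl⟩
    rw [hΔ]; linarith
  have hΔpos : 0 < Δ := by
    obtain ⟨b, hb, hrb⟩ := (hne.image r).csSup_mem hfin
    rw [hΔ, ← hrb]; linarith [hstar b hb]
  -- notation for sums
  set V : ℝ := ∑ a, p a * (r a - μ)^2 with hV_def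
  have E0 : ∑ a, p a * (r a - μ) = 0 := by
    have : ∑ a, p a * (r a - μ) = (∑ a, p a * r a) - μ * ∑ a, p a := by
      rw [Finset.mul_sum, ← Finset.sum_sub_distrib]
      exact Finset.sum_congr rfl fun a _ => by ring
    rw [this, hpsum, ← hμeq]; ring
  -- RHS equals the variance V
  have hRHS : ∑ a, pgrad r θ a * r a = V := by
    have : ∑ a, pgrad r θ a * r a
        = ∑ a, (p a * (r a - μ)^2 + μ * (p a * (r a - μ))) := by
      exact Finset.sum_congr rfl fun a _ => by simp only [pgrad]; ring
    rw [this, Finset.sum_add_distrib, ← Finset.mul_sum, E0, hV_def]; ring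
  rw [hRHS]
  -- S = Σ p (r* - r)^2, and S = V + (r* - μ)^2
  set S : ℝ := ∑ a, p a * (r astar - r a)^2 with hS_def
  have hSV : S = V + (r astar - μ)^2 := by
    have key : ∑ a, (p a * (r astar - r a)^2)
        = ∑ a, (p a * (r a - μ)^2 + (r astar - μ)^2 * p a
            - 2*(r astar - μ) * (p a * (r a - μ))) :=
      Finset.sum_congr rfl fun a _ => by ring
    rw [hS_def, key]
    simp only [Finset.sum_sub_distrib, Finset.sum_add_distrib, ← Finset.mul_sum,
      hpsum, E0]
    ring
  -- erase set
  set e : Finset (Fin K) := Finset.univ.erase astar with he_def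
  have hsplitV : p astar * (r astar - μ)^2 + ∑ a ∈ e, p a * (r a - μ)^2 = V :=
    Finset.add_sum_erase Finset.univ (fun a => p a * (r a - μ)^2) (Finset.mem_univ astar)
  have hsplitp : p astar + ∑ a ∈ e, p a = 1 := by
    have h0 : p astar + ∑ a ∈ e, p a = ∑ a, p a :=
      Finset.add_sum_erase Finset.univ p (Finset.mem_univ astar)
    rw [h0, hpsum]
  have hT' : ∑ a ∈ e, p a * (μ - r a) = p astar * (r astar - μ) := by
    have h0 : p astar * (r astar - μ) + ∑ a ∈ e, p a * (r a - μ)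
        = ∑ a, p a * (r a - μ) :=
      Finset.add_sum_erase Finset.univ (fun a => p a * (r a - μ)) (Finset.mem_univ astar)
    have h2 : ∑ a ∈ e, p a * (μ - r a) = - ∑ a ∈ e, p a * (r a - μ) := by
      rw [← Finset.sum_neg_distrib]
      exact Finset.sum_congr rfl fun a _ => by ring
    rw [h2]; linarith [E0, h0]
  -- Cauchy–Schwarz on e
  have hCS : (∑ a ∈ e, p a * (μ - r a))^2
      ≤ (∑ a ∈ e, p a) * ∑ a ∈ e, p a * (μ - r a)^2 := by
    apply Finset.sum_sq_le_sum_mul_sum_of_sq_eq_mul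
    · exact fun a _ => (hppos a).le
    · exact fun a _ => mul_nonneg (hppos a).le (sq_nonneg _)
    · exact fun a _ => by ring
  -- conclude V ≥ p* * S
  have hVpS : p astar * S ≤ V := by
    have hq : ∑ a ∈ e, p a = 1 - p astar := by linarith
    have hV' : ∑ a ∈ e, p a * (μ - r a)^2 = ∑ a ∈ e, p a * (r a - μ)^2 :=
      Finset.sum_congr rfl fun a _ => by ring
    rw [hT', hq, hV'] at hCS
    have key : p astar * S - V = (p astar * (r astar - μ))^2
        - (1 - p astar) * (∑ a ∈ e, p a * (r a - μ)^2) := by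
      rw [hSV, ← hsplitV]; ring
    linarith [hCS, key]
  -- S ≥ Δ * (r* - μ)
  have hSΔ : Δ * (r astar - μ) ≤ S := by
    have hterm : ∀ a ∈ Finset.univ, p a * (Δ * (r astar - r a)) ≤ p a * (r astar - r a)^2 := by
      intro a _
      rcases eq_or_ne a astar with h | h
      · subst h; simp
      · have h1 := hΔle a h
        have h2 := (hppos a).le
        have hg : 0 ≤ r astar - r a := le_trans hΔpos.le h1
        nlinarith [mul_nonneg (mul_nonneg h2 hg) (sub_nonneg.mpr h1)]
    have hsum := Finset.sum_le_sum hterm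
    have heq : ∑ a, p a * (Δ * (r astar - r a)) = Δ * (r astar - μ) := by
      have h1 : ∑ a, p a * (Δ * (r astar - r a))
          = (∑ a, Δ * r astar * p a) - ∑ a, Δ * (p a * r a) := by
        rw [← Finset.sum_sub_distrib]
        exact Finset.sum_congr rfl fun a _ => by ring
      rw [h1, ← Finset.mul_sum, ← Finset.mul_sum, hpsum, ← hμeq]; ring
    rw [heq] at hsum
    exact hsum
  have hfinal : p astar * (Δ * (r astar - μ)) ≤ p astar * S :=
    mul_le_mul_of_nonneg_left hSΔ (hppos astar).le
  calc softmax θ astar * Δ * (r astar - μ) = p astar * (Δ * (r astar - μ)) := by ring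
    _ ≤ p astar * S := hfinal
    _ ≤ V := hVpS
end

section
/- Natural non-uniform Łojasiewicz inequality (discrete form): let π be any probability distribution on [K], let η > 0, and define the exponentiated update π'(a) := π(a)·e^{η·r(a)} / Σ_{a'} π(a')·e^{η·r(a')} for all a ∈ [K]. Then (π' − π)ᵀ r ≥ [1 − 1/(π(a*)·(e^{η·Δ} − 1) + 1)]·(π* − π)ᵀ r. -/
open Finset Real Filter

/-- Natural non-uniform Łojasiewicz inequality (discrete form): for any probability
distribution `p` on `[K]`, `η > 0`, and the exponentiated update
`p'(a) = p(a)·e^{η·r(a)} / Σ_{a'} p(a')·e^{η·r(a')}`, one has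
`(p' − p)ᵀ r ≥ [1 − 1/(p(a*)·(e^{η·Δ} − 1) + 1)]·(r(a*) − pᵀ r)`. -/
theorem natural_nonuniform_lojasiewicz_discrete
    {K : ℕ} (hK : 2 ≤ K) (r : Fin K → ℝ)
    (hr : ∀ a, 0 < r a ∧ r a ≤ 1)
    (astar : Fin K) (hstar : ∀ a, a ≠ astar → r a < r astar)
    (Δ : ℝ) (hΔ : Δ = r astar - sSup (r '' {a | a ≠ astar}))
    (p : Fin K → ℝ) (hp : ∀ a, 0 ≤ p a) (hp1 : ∑ a, p a = 1)
    (η : ℝ) (hη : 0 < η)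
    (p' : Fin K → ℝ)
    (hp' : ∀ a, p' a = p a * Real.exp (η * r a) / ∑ a', p a' * Real.exp (η * r a')) :
    (1 - 1 / (p astar * (Real.exp (η * Δ) - 1) + 1)) * (r astar - ∑ a, p a * r a) ≤
      ∑ a, p' a * r a - ∑ a, p a * r a := by
  classical
  set f : Fin K → ℝ := fun a => Real.exp (η * r a) with hf
  have hfpos : ∀ a, 0 < f a := fun a => Real.exp_pos _
  set Z : ℝ := ∑ a, p a * f a with hZ
  set A : ℝ := ∑ a, p a * f a * r a with hA
  set B : ℝ := ∑ a, p a * r a with hB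
  -- Z > 0
  have hex : ∃ a, 0 < p a := by
    by_contra h
    push_neg at h
    have h0 : ∀ a ∈ Finset.univ, p a = 0 := fun a _ => le_antisymm (h a) (hp a)
    rw [Finset.sum_eq_zero h0] at hp1
    norm_num at hp1
  obtain ⟨a0, ha0⟩ := hex
  have hZpos : 0 < Z := by
    have h1 : p a0 * f a0 ≤ Z := Finset.single_le_sum
      (fun a _ => mul_nonneg (hp a) (hfpos a).le) (Finset.mem_univ a0)
    nlinarith [hfpos a0]
  -- Δ facts
  have hcard : 1 < Fintype.card (Fin K) := by simpa using lt_of_lt_of_le one_lt_two hK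
  obtain ⟨b0, hb0⟩ := Fintype.exists_ne_of_one_lt_card hcard astar
  have hne : (r '' {a | a ≠ astar}).Nonempty := ⟨r b0, ⟨b0, hb0, rfl⟩⟩
  have hfin : (r '' {a | a ≠ astar}).Finite := (Set.toFinite _).image r
  have hΔpos : 0 < Δ := by
    obtain ⟨b, hb, hbe⟩ := hne.csSup_mem hfin
    rw [hΔ, ← hbe]
    have := hstar b hb
    linarith
  have hΔle : ∀ b, b ≠ astar → r b + Δ ≤ r astar := by
    intro b hb
    have h1 : r b ≤ sSup (r '' {a | a ≠ astar}) :=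
      le_csSup hfin.bddAbove ⟨b, hb, rfl⟩
    rw [hΔ]; linarith
  set E : ℝ := Real.exp (η * Δ) with hE
  have hE1 : 1 ≤ E := by
    rw [hE]
    have : (0:ℝ) ≤ η * Δ := by positivity
    simpa using Real.one_le_exp this
  -- monotone product nonneg
  have hmono : ∀ a b : Fin K, 0 ≤ (f a - f b) * (r a - r b) := by
    intro a b
    rcases le_total (r a) (r b) with h | h
    · have hfe : f a ≤ f b := Real.exp_le_exp.2 (by nlinarith)
      nlinarith
    · have hfe : f b ≤ f a := Real.exp_le_exp.2 (by nlinarith)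
      nlinarith
  have hsnn : ∀ a b : Fin K, 0 ≤ p a * p b * ((f a - f b) * (r a - r b)) :=
    fun a b => mul_nonneg (mul_nonneg (hp a) (hp b)) (hmono a b)
  -- double sum identity
  have hT : (∑ a, ∑ b, p a * p b * ((f a - f b) * (r a - r b))) = 2 * (A - Z * B) := by
    have key : ∀ a : Fin K, ∑ b, p a * p b * ((f a - f b) * (r a - r b))
        = (p a * f a * r a) * (∑ b, p b) - (p a * f a) * B - (p a * r a) * Z + p a * A := by
      intro a
      rw [hB, hZ, hA, Finset.mul_sum, Finset.mul_sum, Finset.mul_sum, Finset.mul_sum,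
        ← Finset.sum_sub_distrib, ← Finset.sum_sub_distrib, ← Finset.sum_add_distrib]
      exact Finset.sum_congr rfl fun b _ => by ring
    simp_rw [key, hp1]
    rw [Finset.sum_add_distrib, Finset.sum_sub_distrib, Finset.sum_sub_distrib,
      ← Finset.sum_mul, ← Finset.sum_mul, ← Finset.sum_mul, ← Finset.sum_mul,
      ← hA, ← hZ, ← hB]
    rw [hp1]
    ring
  -- row bound
  set R : ℝ := ∑ b, p b * ((f astar - f b) * (r astar - r b)) with hR
  have hrowsum : (∑ b, p astar * p b * ((f astar - f b) * (r astar - r b))) = p astar * R := by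
    rw [hR, Finset.mul_sum]
    exact Finset.sum_congr rfl fun b _ => by ring
  have hcolsum : (∑ a, p a * p astar * ((f a - f astar) * (r a - r astar))) = p astar * R := by
    rw [hR, Finset.mul_sum]
    exact Finset.sum_congr rfl fun a _ => by ring
  have hTlb : 2 * (p astar * R) ≤ ∑ a, ∑ b, p a * p b * ((f a - f b) * (r a - r b)) := by
    have hsplit : (∑ a, ∑ b, p a * p b * ((f a - f b) * (r a - r b)))
        = (∑ b, p astar * p b * ((f astar - f b) * (r astar - r b)))
          + ∑ a ∈ Finset.univ.erase astar, ∑ b, p a * p b * ((f a - f b) * (r a - r b)) :=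
      (Finset.add_sum_erase _ _ (Finset.mem_univ astar)).symm
    have hinner : ∀ a ∈ Finset.univ.erase astar,
        p a * p astar * ((f a - f astar) * (r a - r astar))
          ≤ ∑ b, p a * p b * ((f a - f b) * (r a - r b)) := fun a _ =>
      Finset.single_le_sum (fun b _ => hsnn a b) (Finset.mem_univ astar)
    have herase : (∑ a ∈ Finset.univ.erase astar, p a * p astar * ((f a - f astar) * (r a - r astar)))
        = ∑ a, p a * p astar * ((f a - f astar) * (r a - r astar)) :=
      Finset.sum_erase _ (by ring)
    have h2 : p astar * R ≤ ∑ a ∈ Finset.univ.erase astar, ∑ b, p a * p b * ((f a - f b) * (r a - r b)) := by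
      calc p astar * R = ∑ a ∈ Finset.univ.erase astar, p a * p astar * ((f a - f astar) * (r a - r astar)) := by
            rw [herase, hcolsum]
        _ ≤ _ := Finset.sum_le_sum hinner
    rw [hsplit, hrowsum]
    linarith
  -- R lower bound
  have hRlb : (E - 1) * (Z * r astar - A) ≤ R := by
    have h1 : (∑ b, (E - 1) * (p b * f b * (r astar - r b))) ≤ R := by
      rw [hR]
      apply Finset.sum_le_sum
      intro b _
      by_cases hb : b = astar
      · subst hb; simp
      · have hrb : 0 ≤ r astar - r b := by have := hstar b hb; linarith
        have hfb : f b * E ≤ f astar := by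
          rw [hf, hE]
          simp only []
          rw [← Real.exp_add]
          apply Real.exp_le_exp.2
          have := hΔle b hb
          nlinarith
        have : (E - 1) * (f b) ≤ f astar - f b := by nlinarith
        have hpb := hp b
        nlinarith [mul_le_mul_of_nonneg_right this hrb]
    have h2 : (∑ b, (E - 1) * (p b * f b * (r astar - r b))) = (E - 1) * (Z * r astar - A) := by
      rw [← Finset.mul_sum]
      congr 1
      rw [hZ, hA, Finset.sum_mul, ← Finset.sum_sub_distrib]
      exact Finset.sum_congr rfl fun b _ => by ring
    linarith [h2 ▸ h1]
  -- combine: key inequality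
  have hkey : p astar * (E - 1) * (Z * r astar - A) ≤ A - Z * B := by
    have h1 : p astar * ((E - 1) * (Z * r astar - A)) ≤ p astar * R :=
      mul_le_mul_of_nonneg_left hRlb (hp astar)
    nlinarith [hT ▸ hTlb]
  -- p' sum
  have hp'sum : ∑ a, p' a * r a = A / Z := by
    rw [hA, Finset.sum_div]
    apply Finset.sum_congr rfl
    intro a _
    rw [hp' a]
    simp only [hf]
    ring
  rw [hp'sum]
  clear_value f Z A B E
  -- final algebra
  set D : ℝ := p astar * (E - 1) + 1 with hD
  clear_value D
  have hD1 : 1 ≤ D := by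
    have : 0 ≤ p astar * (E - 1) := mul_nonneg (hp astar) (by linarith)
    rw [hD]; linarith
  have hDpos : 0 < D := lt_of_lt_of_le one_pos hD1
  set u : ℝ := A / Z with hu
  clear_value u
  have hA' : A = u * Z := by rw [hu]; field_simp
  have hkey' : (D - 1) * (r astar - u) ≤ u - B := by
    rw [hA'] at hkey
    have hD' : D - 1 = p astar * (E - 1) := by rw [hD]; ring
    rw [hD']
    have h2 : Z * (p astar * (E - 1) * (r astar - u)) ≤ Z * (u - B) := by
      have e1 : Z * (p astar * (E - 1) * (r astar - u))
          = p astar * (E - 1) * (Z * r astar - u * Z) := by ring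
      have e2 : Z * (u - B) = u * Z - Z * B := by ring
      rw [e1, e2]; exact hkey
    exact le_of_mul_le_mul_left h2 hZpos
  have hgoal : (1 - 1 / D) * (r astar - B) ≤ u - B := by
    have h1 : (1 - 1 / D) = (D - 1) / D := by field_simp
    rw [h1, div_mul_eq_mul_div, div_le_iff₀ hDpos]
    have h4 : (D - 1) * (r astar - B) = (D - 1) * (r astar - u) + (D - 1) * (u - B) := by ring
    have h5 : (u - B) * D = (u - B) + (D - 1) * (u - B) := by ring
    linarith [hkey']
  exact hgoal
end

section
/- NPG upper bound with exact gradients: fix any η > 0 and any θ_1 ∈ ℝ^K, and define θ_{t+1} := θ_t + η·r for all t ≥ 1 (natural policy gradient update). Then for all t ≥ 1, (π* − π_{θ_t})ᵀ r ≤ (π* − π_{θ_1})ᵀ r · exp(−c·(t − 1)), where c := log(π_{θ_1}(a*)·(e^{η·Δ} − 1) + 1) > 0. -/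
open Finset Real Filter

/-- Weighted Chebyshev sum inequality for anti-monotone pairs. -/
lemma npg_cheb {ι : Type*} (S : Finset ι) (W g s : ι → ℝ) (hW : ∀ a ∈ S, 0 ≤ W a)
    (hmono : ∀ a b, 0 ≤ (g a - g b) * (s b - s a)) :
    (∑ a ∈ S, W a) * (∑ a ∈ S, W a * s a * g a) ≤
      (∑ a ∈ S, W a * g a) * (∑ a ∈ S, W a * s a) := by
  have key : 0 ≤ ∑ a ∈ S, ∑ b ∈ S, W a * W b * ((g a - g b) * (s b - s a)) :=
    Finset.sum_nonneg fun a ha => Finset.sum_nonneg fun b hb =>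
      mul_nonneg (mul_nonneg (hW a ha) (hW b hb)) (hmono a b)
  have expand : ∑ a ∈ S, ∑ b ∈ S, W a * W b * ((g a - g b) * (s b - s a))
      = 2 * ((∑ a ∈ S, W a * g a) * (∑ a ∈ S, W a * s a)
            - (∑ a ∈ S, W a) * (∑ a ∈ S, W a * s a * g a)) := by
    have h1 : ∀ a ∈ S, ∑ b ∈ S, W a * W b * ((g a - g b) * (s b - s a))
        = (W a * g a) * (∑ b ∈ S, W b * s b)
          - W a * (∑ b ∈ S, W b * s b * g b)
          - (W a * g a * s a) * (∑ b ∈ S, W b)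
          + (W a * s a) * (∑ b ∈ S, W b * g b) := by
      intro a _
      rw [Finset.mul_sum, Finset.mul_sum, Finset.mul_sum, Finset.mul_sum,
        ← Finset.sum_sub_distrib, ← Finset.sum_sub_distrib, ← Finset.sum_add_distrib]
      exact Finset.sum_congr rfl fun b _ => by ring
    rw [Finset.sum_congr rfl h1]
    rw [Finset.sum_add_distrib, Finset.sum_sub_distrib, Finset.sum_sub_distrib,
      ← Finset.sum_mul, ← Finset.sum_mul, ← Finset.sum_mul, ← Finset.sum_mul]
    ring_nf
    rw [show ∑ a ∈ S, W a * g a * s a = ∑ a ∈ S, W a * s a * g a from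
      Finset.sum_congr rfl fun a _ => by ring]
    ring
  linarith [expand ▸ key]

/-- Core one-step algebraic inequality for the NPG update. -/
lemma npg_core {ι : Type*} [Fintype ι] [DecidableEq ι] (astar : ι) (W g s : ι → ℝ) (E : ℝ)
    (hW : ∀ a, 0 < W a) (hg : ∀ a, 0 ≤ g a) (hgstar : g astar = 0) (hsstar : s astar = 1)
    (hEs : ∀ a, a ≠ astar → s a * E ≤ 1)
    (hmono : ∀ a b, 0 ≤ (g a - g b) * (s b - s a)) :
    (∑ a, W a * s a * g a) * (W astar * (E - 1) + ∑ a, W a)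
      ≤ (∑ a, W a * g a) * (∑ a, W a * s a) := by
  classical
  set S' : Finset ι := Finset.univ.erase astar with hS'
  have hmemstar : astar ∈ (Finset.univ : Finset ι) := Finset.mem_univ _
  have hA : ∑ a, W a * s a * g a = ∑ a ∈ S', W a * s a * g a := by
    rw [← Finset.sum_erase _ (by rw [hgstar]; ring)]
  have hG : ∑ a, W a * g a = ∑ a ∈ S', W a * g a := by
    rw [← Finset.sum_erase _ (by rw [hgstar]; ring)]
  have hT : ∑ a, W a = W astar + ∑ a ∈ S', W a :=
    (Finset.add_sum_erase _ _ hmemstar).symm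
  have hU : ∑ a, W a * s a = W astar + ∑ a ∈ S', W a * s a := by
    rw [← Finset.add_sum_erase _ _ hmemstar, hsstar, mul_one]
  set A := ∑ a ∈ S', W a * s a * g a
  set G := ∑ a ∈ S', W a * g a
  set T' := ∑ a ∈ S', W a
  set U' := ∑ a ∈ S', W a * s a
  have claim1 : E * A ≤ G := by
    rw [Finset.mul_sum]
    refine Finset.sum_le_sum fun a ha => ?_
    have haa : a ≠ astar := Finset.ne_of_mem_erase ha
    have := hEs a haa
    nlinarith [mul_le_mul_of_nonneg_left this (mul_nonneg (hW a).le (hg a))]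
  have hcheb : T' * A ≤ G * U' :=
    npg_cheb S' W g s (fun a _ => (hW a).le) hmono
  have hWstar : 0 ≤ W astar := (hW astar).le
  rw [hA, hG, hT, hU]
  nlinarith [mul_le_mul_of_nonneg_left claim1 hWstar]

set_option maxHeartbeats 1000000 in
/-- NPG upper bound with exact gradients: with the natural policy gradient update
`θ_{t+1} = θ_t + η·r` (here `θ 0` is the paper's `θ_1`, so the paper's `θ_t`
is `θ (t-1)` and the rate `e^{−c(t−1)}` becomes `e^{−c·t}`), one has
`(π* − π_{θ_t})ᵀ r ≤ (π* − π_{θ_1})ᵀ r · e^{−c·(t−1)}` where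
`c = log(π_{θ_1}(a*)·(e^{η·Δ} − 1) + 1) > 0`. -/
theorem npg_true_gradient_upper_bound
    {K : ℕ} (hK : 2 ≤ K) (r : Fin K → ℝ)
    (hr : ∀ a, 0 < r a ∧ r a ≤ 1)
    (astar : Fin K) (hstar : ∀ a, a ≠ astar → r a < r astar)
    (Δ : ℝ) (hΔ : Δ = r astar - sSup (r '' {a | a ≠ astar}))
    (η : ℝ) (hη : 0 < η)
    (θ : ℕ → Fin K → ℝ)
    (hupd : ∀ t, θ (t + 1) = fun a => θ t a + η * r a)
    (c : ℝ) (hc : c = Real.log (softmax (θ 0) astar * (Real.exp (η * Δ) - 1) + 1)) :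
    0 < c ∧
      ∀ t : ℕ,
        r astar - expReward r (θ t) ≤
          (r astar - expReward r (θ 0)) * Real.exp (-c * t) := by
  have hK0 : 0 < K := by omega
  haveI : NeZero K := ⟨by omega⟩
  -- there is a suboptimal action
  obtain ⟨b, hb⟩ : ∃ b : Fin K, b ≠ astar := by
    have hcard : 1 < Fintype.card (Fin K) := by simp only [Fintype.card_fin]; omega
    exact Fintype.exists_ne_of_one_lt_card hcard astar
  -- gap facts
  have hsfin : (r '' {a | a ≠ astar}).Finite := Set.toFinite _
  have hsne : (r '' {a | a ≠ astar}).Nonempty := ⟨r b, b, hb, rfl⟩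
  obtain ⟨b0, hb0, hMeq⟩ := hsne.csSup_mem hsfin
  have hΔpos : 0 < Δ := by
    rw [hΔ, ← hMeq]
    have := hstar b0 hb0
    linarith
  have hgap : ∀ a, a ≠ astar → r a ≤ r astar - Δ := by
    intro a ha
    have : r a ≤ sSup (r '' {a | a ≠ astar}) :=
      le_csSup hsfin.bddAbove ⟨a, ha, rfl⟩
    rw [hΔ]; linarith
  have hrle : ∀ a, r a ≤ r astar := by
    intro a
    rcases eq_or_ne a astar with h | h
    · rw [h]
    · exact (hstar a h).le
  -- positivity of normalizers and policies
  have hTpos : ∀ t, 0 < ∑ a, Real.exp (θ t a) := fun t =>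
    Finset.sum_pos (fun a _ => Real.exp_pos _) Finset.univ_nonempty
  have hπpos : ∀ t a, 0 < softmax (θ t) a := fun t a =>
    div_pos (Real.exp_pos _) (hTpos t)
  have hπsum : ∀ t, ∑ a, softmax (θ t) a = 1 := by
    intro t
    simp only [softmax]
    rw [← Finset.sum_div]
    exact div_self (hTpos t).ne'
  -- suboptimality as a sum
  have hδ : ∀ t, r astar - expReward r (θ t)
      = ∑ a, softmax (θ t) a * (r astar - r a) := by
    intro t
    have : ∑ a, softmax (θ t) a * (r astar - r a)
        = (∑ a, softmax (θ t) a) * r astar - ∑ a, softmax (θ t) a * r a := by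
      rw [Finset.sum_mul, ← Finset.sum_sub_distrib]
      exact Finset.sum_congr rfl fun a _ => by ring
    rw [this, hπsum t, one_mul, expReward]
  have hδnn : ∀ t, 0 ≤ r astar - expReward r (θ t) := by
    intro t
    rw [hδ]
    exact Finset.sum_nonneg fun a _ =>
      mul_nonneg (hπpos t a).le (by linarith [hrle a])
  -- c > 0 and exp c
  have hE1 : 1 < Real.exp (η * Δ) := by
    have : (0:ℝ) < η * Δ := mul_pos hη hΔpos
    calc (1:ℝ) = Real.exp 0 := Real.exp_zero.symm
    _ < Real.exp (η * Δ) := Real.exp_lt_exp.mpr this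
  have hCgt1 : 1 < softmax (θ 0) astar * (Real.exp (η * Δ) - 1) + 1 := by
    nlinarith [hπpos 0 astar]
  have hc0 : 0 < c := by rw [hc]; exact Real.log_pos hCgt1
  have hexpc : Real.exp c = softmax (θ 0) astar * (Real.exp (η * Δ) - 1) + 1 := by
    rw [hc, Real.exp_log (by linarith)]
  -- monotonicity of the optimal-action probability
  have hπstep : ∀ t, softmax (θ t) astar ≤ softmax (θ (t + 1)) astar := by
    intro t
    simp only [softmax, hupd t]
    have hd1 : (0:ℝ) < ∑ a', Real.exp (θ t a') := hTpos t
    have hd2 : (0:ℝ) < ∑ a', Real.exp (θ t a' + η * r a') :=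
      Finset.sum_pos (fun a _ => Real.exp_pos _) Finset.univ_nonempty
    rw [div_le_div_iff₀ hd1 hd2]
    have key : ∑ a', Real.exp (θ t a' + η * r a')
        ≤ Real.exp (η * r astar) * ∑ a', Real.exp (θ t a') := by
      rw [Finset.mul_sum]
      refine Finset.sum_le_sum fun a _ => ?_
      rw [Real.exp_add, mul_comm (Real.exp (θ t a))]
      exact mul_le_mul_of_nonneg_right
        (Real.exp_le_exp.mpr (by nlinarith [hrle a])) (Real.exp_pos _).le
    calc Real.exp (θ t astar) * ∑ a', Real.exp (θ t a' + η * r a')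
        ≤ Real.exp (θ t astar) * (Real.exp (η * r astar) * ∑ a', Real.exp (θ t a')) :=
          mul_le_mul_of_nonneg_left key (Real.exp_pos _).le
      _ = Real.exp (θ t astar + η * r astar) * ∑ a', Real.exp (θ t a') := by
          rw [Real.exp_add]; ring
  have hπmono : ∀ t, softmax (θ 0) astar ≤ softmax (θ t) astar := by
    intro t
    induction t with
    | zero => exact le_rfl
    | succ n ih => exact ih.trans (hπstep n)
  -- one-step contraction
  have hstep : ∀ t, (r astar - expReward r (θ (t + 1))) * Real.exp c
      ≤ r astar - expReward r (θ t) := by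
    intro t
    set W : Fin K → ℝ := fun a => Real.exp (θ t a) with hW
    set g : Fin K → ℝ := fun a => r astar - r a with hg
    set s : Fin K → ℝ := fun a => Real.exp (-(η * g a)) with hs
    set E : ℝ := Real.exp (η * Δ) with hE
    have hWpos : ∀ a, 0 < W a := fun a => Real.exp_pos _
    have hgnn : ∀ a, 0 ≤ g a := fun a => by simp only [hg]; linarith [hrle a]
    have hgstar : g astar = 0 := by simp [hg]
    have hsstar : s astar = 1 := by simp [hs, hgstar]
    have hspos : ∀ a, 0 < s a := fun a => Real.exp_pos _
    have hEs : ∀ a, a ≠ astar → s a * E ≤ 1 := by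
      intro a ha
      have hga : Δ ≤ g a := by simp only [hg]; linarith [hgap a ha]
      rw [hs, hE, ← Real.exp_add]
      calc Real.exp (-(η * g a) + η * Δ) ≤ Real.exp 0 :=
        Real.exp_le_exp.mpr (by nlinarith)
      _ = 1 := Real.exp_zero
    have hmono : ∀ a b, 0 ≤ (g a - g b) * (s b - s a) := by
      intro a b
      rcases le_total (g a) (g b) with h | h
      · have : s b ≤ s a := Real.exp_le_exp.mpr (by nlinarith)
        nlinarith
      · have : s a ≤ s b := Real.exp_le_exp.mpr (by nlinarith)
        nlinarith
    have core := npg_core astar W g s E hWpos hgnn hgstar hsstar hEs hmono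
    -- sums
    set A := ∑ a, W a * s a * g a with hA
    set G := ∑ a, W a * g a with hG
    set T := ∑ a, W a with hT
    set U := ∑ a, W a * s a with hU
    have hTp : 0 < T := hTpos t
    have hUp : 0 < U := Finset.sum_pos (fun a _ => mul_pos (hWpos a) (hspos a))
      Finset.univ_nonempty
    have hAnn : 0 ≤ A := Finset.sum_nonneg fun a _ =>
      mul_nonneg (mul_nonneg (hWpos a).le (hspos a).le) (hgnn a)
    have hGnn : 0 ≤ G := Finset.sum_nonneg fun a _ =>
      mul_nonneg (hWpos a).le (hgnn a)
    -- expression of δ t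
    have hδt : r astar - expReward r (θ t) = G / T := by
      rw [hδ t, hG, hT, Finset.sum_div]
      exact Finset.sum_congr rfl fun a _ => by
        simp only [softmax, hW, hg]
        ring
    -- exp of updated parameters
    have hexpnew : ∀ a, Real.exp (θ (t + 1) a)
        = Real.exp (η * r astar) * (W a * s a) := by
      intro a
      rw [hupd t]
      simp only [hW, hs, hg, ← Real.exp_add]
      congr 1
      ring
    have hZ : ∑ a', Real.exp (θ (t + 1) a') = Real.exp (η * r astar) * U := by
      rw [hU, Finset.mul_sum]
      exact Finset.sum_congr rfl fun a _ => hexpnew a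
    have hδt1 : r astar - expReward r (θ (t + 1)) = A / U := by
      rw [hδ (t + 1), hA, Finset.sum_div]
      refine Finset.sum_congr rfl fun a _ => ?_
      simp only [softmax, hexpnew a, hZ]
      rw [mul_div_mul_left _ _ (Real.exp_pos (η * r astar)).ne']
      simp only [hg]
      ring
    -- putting it together
    have hπt : softmax (θ t) astar = W astar / T := rfl
    have hπ0t : softmax (θ 0) astar ≤ W astar / T := hπt ▸ hπmono t
    clear_value W g s E A G T U
    have h1 : Real.exp c ≤ W astar / T * (E - 1) + 1 := by
      rw [hexpc]
      nlinarith [hπ0t, hE1, hπpos 0 astar]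
    have h2 : A / U * (W astar / T * (E - 1) + 1) ≤ G / T := by
      have heq : A / U * (W astar / T * (E - 1) + 1)
          = (A * (W astar * (E - 1) + T)) / (U * T) := by
        field_simp
      rw [heq, div_le_div_iff₀ (mul_pos hUp hTp) hTp]
      nlinarith [core]
    calc (r astar - expReward r (θ (t + 1))) * Real.exp c
        = A / U * Real.exp c := by rw [hδt1]
      _ ≤ A / U * (W astar / T * (E - 1) + 1) :=
          mul_le_mul_of_nonneg_left h1 (div_nonneg hAnn hUp.le)
      _ ≤ G / T := h2
      _ = r astar - expReward r (θ t) := hδt.symm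
  -- conclude by induction
  refine ⟨hc0, fun t => ?_⟩
  induction t with
  | zero => simp
  | succ n ih =>
    push_cast
    have h1 := hstep n
    have h2 : r astar - expReward r (θ (n + 1))
        ≤ (r astar - expReward r (θ n)) * Real.exp (-c) := by
      have := mul_le_mul_of_nonneg_right h1 (Real.exp_pos (-c)).le
      rwa [mul_assoc, ← Real.exp_add, add_neg_cancel, Real.exp_zero, mul_one] at this
    have h3 : (r astar - expReward r (θ n)) * Real.exp (-c)
        ≤ (r astar - expReward r (θ 0)) * Real.exp (-c * n) * Real.exp (-c) :=
      mul_le_mul_of_nonneg_right ih (Real.exp_pos _).le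
    calc r astar - expReward r (θ (n + 1))
        ≤ (r astar - expReward r (θ 0)) * Real.exp (-c * n) * Real.exp (-c) :=
          h2.trans h3
      _ = (r astar - expReward r (θ 0)) * Real.exp (-c * (n + 1)) := by
          rw [mul_assoc, ← Real.exp_add]
          congr 2
          push_cast
          ring
end

section
/- Non-uniform smoothness of the softmax expected reward: let S(θ) ∈ ℝ^{K×K} denote the Hessian of the map θ ↦ π_θᵀ r at θ. Then for every θ ∈ ℝ^K and every y ∈ ℝ^K, |yᵀ S(θ) y| ≤ 3·‖d(π_θᵀ r)/dθ‖₂·‖y‖₂²; in particular the spectral radius of S(θ) is at most 3·‖d(π_θᵀ r)/dθ‖₂. -/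
open Finset Real Filter

noncomputable abbrev pr {K : ℕ} (a : Fin K) : (Fin K → ℝ) →L[ℝ] ℝ :=
  ContinuousLinearMap.proj a

noncomputable def lin {K : ℕ} (c : Fin K → ℝ) : (Fin K → ℝ) →L[ℝ] ℝ :=
  ∑ i, c i • pr i

@[simp] lemma lin_apply {K : ℕ} (c v : Fin K → ℝ) : lin c v = ∑ i, c i * v i := by
  simp [lin, ContinuousLinearMap.sum_apply]

noncomputable def linCLM {K : ℕ} : (Fin K → ℝ) →L[ℝ] ((Fin K → ℝ) →L[ℝ] ℝ) :=
  LinearMap.toContinuousLinearMap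
    { toFun := lin
      map_add' := fun c c' => by ext v; simp [add_mul, Finset.sum_add_distrib]
      map_smul' := fun s c => by ext v; simp [Finset.mul_sum, mul_assoc] }

@[simp] lemma linCLM_apply {K : ℕ} (c : Fin K → ℝ) : linCLM c = lin c := rfl

lemma Zpos {K : ℕ} (hK : 0 < K) (θ : Fin K → ℝ) : 0 < ∑ a', Real.exp (θ a') := by
  have : Nonempty (Fin K) := Fin.pos_iff_nonempty.mp hK
  exact Finset.sum_pos (fun a _ => Real.exp_pos _) Finset.univ_nonempty

lemma hZ {K : ℕ} (θ : Fin K → ℝ) : HasFDerivAt (fun θ' : Fin K → ℝ => ∑ a', Real.exp (θ' a'))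
    (∑ a', Real.exp (θ a') • pr a') θ :=
  HasFDerivAt.fun_sum fun a _ => ((pr a).hasFDerivAt (x := θ)).exp

lemma hsoftmax {K : ℕ} (hK : 0 < K) (θ : Fin K → ℝ) (a : Fin K) :
    HasFDerivAt (fun θ' => softmax θ' a)
      (softmax θ a • (pr a - lin (softmax θ))) θ := by
  have hz := Zpos hK θ
  have hinv : HasFDerivAt (fun θ' : Fin K → ℝ => (∑ a', Real.exp (θ' a'))⁻¹)
      ((-ContinuousLinearMap.mulLeftRight ℝ ℝ (∑ a', Real.exp (θ a'))⁻¹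
        (∑ a', Real.exp (θ a'))⁻¹).comp (∑ a', Real.exp (θ a') • pr a')) θ :=
    (hasFDerivAt_inv' hz.ne').comp θ (hZ θ)
  have hexp : HasFDerivAt (fun θ' : Fin K → ℝ => Real.exp (θ' a))
      (Real.exp (θ a) • pr a) θ :=
    ((pr a).hasFDerivAt (x := θ)).exp
  have h := hexp.fun_mul hinv
  have heq : (fun θ' : Fin K → ℝ => Real.exp (θ' a) * (∑ a', Real.exp (θ' a'))⁻¹)
      = fun θ' => softmax θ' a := by
    funext θ'; simp [softmax, div_eq_mul_inv]
  rw [heq] at h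
  refine h.congr_fderiv ?_
  ext v
  simp only [ContinuousLinearMap.add_apply, ContinuousLinearMap.smul_apply,
    ContinuousLinearMap.comp_apply, ContinuousLinearMap.neg_apply,
    ContinuousLinearMap.mulLeftRight_apply, ContinuousLinearMap.sum_apply, pr,
    ContinuousLinearMap.proj_apply, ContinuousLinearMap.sub_apply, lin_apply, softmax,
    smul_eq_mul]
  have hrxs : ∑ x, Real.exp (θ x) / (∑ a', Real.exp (θ a')) * v x
      = (∑ x, Real.exp (θ x) * v x) / (∑ a', Real.exp (θ a')) := by
    rw [Finset.sum_div]; exact Finset.sum_congr rfl fun x _ => by ring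
  rw [hrxs]
  field_simp
  ring

lemma hf {K : ℕ} (hK : 0 < K) (r θ : Fin K → ℝ) :
    HasFDerivAt (fun θ' => expReward r θ') (lin (pgrad r θ)) θ := by
  have h : HasFDerivAt (fun θ' => expReward r θ')
      (∑ a, r a • (softmax θ a • (pr a - lin (softmax θ)))) θ := by
    have := HasFDerivAt.fun_sum (u := Finset.univ)
      (fun a _ => (hsoftmax hK θ a).mul_const (r a))
    simpa [expReward, smul_smul, mul_comm] using this
  refine h.congr_fderiv ?_
  ext v
  simp only [ContinuousLinearMap.sum_apply, ContinuousLinearMap.smul_apply,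
    ContinuousLinearMap.sub_apply, pr, ContinuousLinearMap.proj_apply, lin_apply,
    smul_eq_mul, pgrad]
  have h1 : ∀ a : Fin K, r a * (softmax θ a * (v a - ∑ i, softmax θ i * v i))
      = softmax θ a * r a * v a - (softmax θ a * r a) * (∑ i, softmax θ i * v i) := by
    intro a; ring
  rw [Finset.sum_congr rfl fun a _ => h1 a, Finset.sum_sub_distrib, ← Finset.sum_mul]
  have h2 : ∀ a : Fin K, softmax θ a * (r a - expReward r θ) * v a
      = softmax θ a * r a * v a - expReward r θ * (softmax θ a * v a) := by
    intro a; ring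
  rw [Finset.sum_congr rfl fun a _ => h2 a, Finset.sum_sub_distrib, ← Finset.mul_sum,
    expReward]

noncomputable def Da {K : ℕ} (r θ : Fin K → ℝ) (a : Fin K) : (Fin K → ℝ) →L[ℝ] ℝ :=
  softmax θ a • (-(lin (pgrad r θ))) +
    (r a - expReward r θ) • (softmax θ a • (pr a - lin (softmax θ)))

lemma hpg {K : ℕ} (hK : 0 < K) (r θ : Fin K → ℝ) (a : Fin K) :
    HasFDerivAt (fun θ' => pgrad r θ' a) (Da r θ a) θ := by
  have h1 : HasFDerivAt (fun θ' => r a - expReward r θ')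
      (-(lin (pgrad r θ))) θ := (hf hK r θ).const_sub (r a)
  have := (hsoftmax hK θ a).fun_mul h1
  simpa [pgrad, Da] using this

noncomputable def D {K : ℕ} (r θ : Fin K → ℝ) : (Fin K → ℝ) →L[ℝ] (Fin K → ℝ) :=
  ContinuousLinearMap.pi (fun a => Da r θ a)

lemma hDpi {K : ℕ} (hK : 0 < K) (r θ : Fin K → ℝ) :
    HasFDerivAt (fun θ' => pgrad r θ') (D r θ) θ :=
  hasFDerivAt_pi.2 fun a => hpg hK r θ a

lemma hsecond {K : ℕ} (hK : 0 < K) (r θ : Fin K → ℝ) :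
    HasFDerivAt (fun θ' => lin (pgrad r θ')) ((linCLM).comp (D r θ)) θ :=
  (linCLM.hasFDerivAt).comp θ (hDpi hK r θ)

/-- Non-uniform smoothness of the softmax expected reward: the Hessian `S(θ)`
(the second derivative of `θ ↦ π_θᵀ r`) satisfies
`|yᵀ S(θ) y| ≤ 3·‖d(π_θᵀ r)/dθ‖₂·‖y‖₂²` for all `θ, y ∈ ℝ^K`. -/
theorem softmax_nonuniform_smoothness
    {K : ℕ} (hK : 2 ≤ K) (r : Fin K → ℝ)
    (hr : ∀ a, 0 < r a ∧ r a ≤ 1)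
    (θ y : Fin K → ℝ) :
    |iteratedFDeriv ℝ 2 (fun θ' : Fin K → ℝ => expReward r θ') θ ![y, y]| ≤
      3 * pgradNorm r θ * ∑ i, y i ^ 2 := by
  have hK0 : 0 < K := lt_of_lt_of_le (by norm_num) hK
  rw [iteratedFDeriv_two_apply]
  have hfd : (fderiv ℝ fun θ' : Fin K → ℝ => expReward r θ')
      = fun θ' => lin (pgrad r θ') := funext fun θ' => (hf hK0 r θ').fderiv
  rw [hfd, (hsecond hK0 r θ).fderiv]
  simp only [Matrix.cons_val_zero, Matrix.cons_val_one, Matrix.head_cons,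
    ContinuousLinearMap.comp_apply, linCLM_apply, D, ContinuousLinearMap.pi_apply, lin_apply,
    Da, ContinuousLinearMap.add_apply, ContinuousLinearMap.smul_apply,
    ContinuousLinearMap.neg_apply, ContinuousLinearMap.sub_apply, pr,
    ContinuousLinearMap.proj_apply, smul_eq_mul]
  set S := ∑ i, softmax θ i * y i with hSdef
  set G := ∑ i, pgrad r θ i * y i with hGdef
  have hE : ∑ a, (softmax θ a * -G + (r a - expReward r θ) * (softmax θ a * (y a - S))) * y a
      = (∑ a, pgrad r θ a * y a ^ 2) - 2 * G * S := by
    have h1 : ∀ a : Fin K,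
        (softmax θ a * -G + (r a - expReward r θ) * (softmax θ a * (y a - S))) * y a
        = pgrad r θ a * y a ^ 2 - pgrad r θ a * y a * S - softmax θ a * y a * G := by
      intro a; simp only [pgrad]; ring
    rw [Finset.sum_congr rfl fun a _ => h1 a, Finset.sum_sub_distrib, Finset.sum_sub_distrib,
      ← Finset.sum_mul, ← Finset.sum_mul, ← hSdef, ← hGdef]
    ring
  rw [hE]
  have hSy : (0:ℝ) ≤ ∑ i, y i ^ 2 := Finset.sum_nonneg fun i _ => sq_nonneg _
  have hNn : 0 ≤ pgradNorm r θ := Real.sqrt_nonneg _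
  have hsq : Real.sqrt (∑ i, y i ^ 2) * Real.sqrt (∑ i, y i ^ 2) = ∑ i, y i ^ 2 :=
    Real.mul_self_sqrt hSy
  have habs_pg : ∀ a, |pgrad r θ a| ≤ pgradNorm r θ := by
    intro a
    rw [← Real.sqrt_sq_eq_abs, pgradNorm]
    exact Real.sqrt_le_sqrt (Finset.single_le_sum (f := fun i => pgrad r θ i ^ 2)
      (fun i _ => sq_nonneg _) (Finset.mem_univ a))
  have hT1 : |∑ a, pgrad r θ a * y a ^ 2| ≤ pgradNorm r θ * ∑ i, y i ^ 2 := by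
    calc |∑ a, pgrad r θ a * y a ^ 2| ≤ ∑ a, |pgrad r θ a * y a ^ 2| :=
          Finset.abs_sum_le_sum_abs _ _
      _ = ∑ a, |pgrad r θ a| * y a ^ 2 := by
          refine Finset.sum_congr rfl fun a _ => ?_
          rw [abs_mul, abs_of_nonneg (sq_nonneg (y a))]
      _ ≤ ∑ a, pgradNorm r θ * y a ^ 2 :=
          Finset.sum_le_sum fun a _ => mul_le_mul_of_nonneg_right (habs_pg a) (sq_nonneg _)
      _ = pgradNorm r θ * ∑ i, y i ^ 2 := by rw [← Finset.mul_sum]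
  have hCS : |G| ≤ pgradNorm r θ * Real.sqrt (∑ i, y i ^ 2) := by
    have h := Finset.sum_mul_sq_le_sq_mul_sq Finset.univ (pgrad r θ) y
    rw [← Real.sqrt_sq_eq_abs]
    calc Real.sqrt (G ^ 2) ≤ Real.sqrt ((∑ a, pgrad r θ a ^ 2) * ∑ i, y i ^ 2) :=
          Real.sqrt_le_sqrt h
      _ = pgradNorm r θ * Real.sqrt (∑ i, y i ^ 2) := by
          rw [Real.sqrt_mul (Finset.sum_nonneg fun i _ => sq_nonneg _), pgradNorm]
  have hsm_nonneg : ∀ a, 0 ≤ softmax θ a := fun a =>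
    div_nonneg (Real.exp_pos _).le (Zpos hK0 θ).le
  have hsum1 : ∑ a, softmax θ a = 1 := by
    simp only [softmax, ← Finset.sum_div]
    exact div_self (Zpos hK0 θ).ne'
  have hS : |S| ≤ Real.sqrt (∑ i, y i ^ 2) := by
    have h := Finset.sum_mul_sq_le_sq_mul_sq Finset.univ (softmax θ) y
    have h2 : ∑ a, softmax θ a ^ 2 ≤ 1 := by
      have := Finset.sum_sq_le_sq_sum_of_nonneg (s := Finset.univ)
        (f := softmax θ) (fun i _ => hsm_nonneg i)
      rwa [hsum1, one_pow] at this
    rw [← Real.sqrt_sq_eq_abs]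
    calc Real.sqrt (S ^ 2) ≤ Real.sqrt ((∑ a, softmax θ a ^ 2) * ∑ i, y i ^ 2) :=
          Real.sqrt_le_sqrt h
      _ ≤ Real.sqrt (1 * ∑ i, y i ^ 2) :=
          Real.sqrt_le_sqrt (mul_le_mul_of_nonneg_right h2 hSy)
      _ = Real.sqrt (∑ i, y i ^ 2) := by rw [one_mul]
  have h2GS : |G| * |S| ≤ pgradNorm r θ * ∑ i, y i ^ 2 := by
    calc |G| * |S| ≤ (pgradNorm r θ * Real.sqrt (∑ i, y i ^ 2)) * Real.sqrt (∑ i, y i ^ 2) :=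
          mul_le_mul hCS hS (abs_nonneg _) (by positivity)
      _ = pgradNorm r θ * ∑ i, y i ^ 2 := by rw [mul_assoc, hsq]
  calc |(∑ a, pgrad r θ a * y a ^ 2) - 2 * G * S|
      ≤ |∑ a, pgrad r θ a * y a ^ 2| + |2 * G * S| := abs_sub _ _
    _ = |∑ a, pgrad r θ a * y a ^ 2| + 2 * (|G| * |S|) := by
        rw [abs_mul, abs_mul, abs_two]; ring
    _ ≤ pgradNorm r θ * (∑ i, y i ^ 2) + 2 * (pgradNorm r θ * ∑ i, y i ^ 2) := by
        have := h2GS; linarith [hT1]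
    _ = 3 * pgradNorm r θ * ∑ i, y i ^ 2 := by ring
end

section
/- Softmax PG upper bound with exact gradients: define θ_{t+1} := θ_t + (2/5)·d(π_{θ_t}ᵀ r)/dθ_t for all t ≥ 1 from an arbitrary θ_1 ∈ ℝ^K, and let c := inf_{t ≥ 1} π_{θ_t}(a*). If c > 0, then for all t ≥ 1, (π* − π_{θ_t})ᵀ r ≤ 5/(c²·t). Moreover, if the initialization is uniform, i.e. π_{θ_1}(a) = 1/K for all a, then π_{θ_t}(a*) is non-decreasing in t and c ≥ 1/K, so (π* − π_{θ_t})ᵀ r ≤ 5K²/t for all t ≥ 1. -/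
open Finset Real Filter

variable {K : ℕ}

lemma sumexp_pos [NeZero K] (θ : Fin K → ℝ) : 0 < ∑ a', Real.exp (θ a') :=
  Finset.sum_pos (fun _ _ => Real.exp_pos _) ⟨⟨0, Nat.pos_of_ne_zero (NeZero.ne K)⟩, Finset.mem_univ _⟩

lemma softmax_pos [NeZero K] (θ : Fin K → ℝ) (a : Fin K) : 0 < softmax θ a :=
  div_pos (Real.exp_pos _) (sumexp_pos θ)

lemma softmax_sum [NeZero K] (θ : Fin K → ℝ) : ∑ a, softmax θ a = 1 := by
  simp only [softmax, ← Finset.sum_div]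
  exact div_self (sumexp_pos θ).ne'

lemma softmax_le_one [NeZero K] (θ : Fin K → ℝ) (a : Fin K) : softmax θ a ≤ 1 := by
  rw [← softmax_sum (K := K) θ]
  exact Finset.single_le_sum (fun b _ => (softmax_pos θ b).le) (Finset.mem_univ a)

/-- mean of `h` under the softmax at `θ + s d` -/
noncomputable def mexp (θ d : Fin K → ℝ) (s : ℝ) (h : Fin K → ℝ) : ℝ :=
  ∑ a, softmax (fun i => θ i + s * d i) a * h a

lemma mexp_eq [NeZero K] (θ d : Fin K → ℝ) (s : ℝ) (h : Fin K → ℝ) :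
    mexp θ d s h = (∑ b, Real.exp (θ b + s * d b) * h b) / ∑ b, Real.exp (θ b + s * d b) := by
  rw [mexp]
  simp only [softmax, div_mul_eq_mul_div]
  rw [← Finset.sum_div]

lemma hasDerivAt_softmax [NeZero K] (θ d : Fin K → ℝ) (a : Fin K) (s : ℝ) :
    HasDerivAt (fun s => softmax (fun i => θ i + s * d i) a)
      (softmax (fun i => θ i + s * d i) a * (d a - mexp θ d s d)) s := by
  have hN : ∀ b : Fin K, HasDerivAt (fun s => Real.exp (θ b + s * d b))
      (d b * Real.exp (θ b + s * d b)) s := by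
    intro b
    have h1 : HasDerivAt (fun s : ℝ => θ b + s * d b) (d b) s := by
      simpa using ((hasDerivAt_mul_const (d b)).const_add (θ b))
    simpa [mul_comm] using h1.exp
  have hD : HasDerivAt (fun s => ∑ b, Real.exp (θ b + s * d b))
      (∑ b, d b * Real.exp (θ b + s * d b)) s := HasDerivAt.fun_sum (fun b _ => hN b)
  have hDpos : (0:ℝ) < ∑ b, Real.exp (θ b + s * d b) := sumexp_pos _
  have key : HasDerivAt (fun s => softmax (fun i => θ i + s * d i) a) ((d a * Real.exp (θ a + s * d a) * ∑ b, Real.exp (θ b + s * d b) - Real.exp (θ a + s * d a) * ∑ b, d b * Real.exp (θ b + s * d b)) / (∑ b, Real.exp (θ b + s * d b)) ^ 2) s := (hN a).div hD hDpos.ne'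
  convert key using 1
  have e1 : softmax (fun i => θ i + s * d i) a
      = Real.exp (θ a + s * d a) / ∑ b, Real.exp (θ b + s * d b) := rfl
  have e3 : ∑ b, d b * Real.exp (θ b + s * d b) = ∑ b, Real.exp (θ b + s * d b) * d b :=
    Finset.sum_congr rfl (fun b _ => mul_comm _ _)
  rw [e1, mexp_eq, e3]
  set S := ∑ b, Real.exp (θ b + s * d b)
  set T := ∑ b, Real.exp (θ b + s * d b) * d b
  field_simp

lemma hasDerivAt_mexp [NeZero K] (θ d h : Fin K → ℝ) (s : ℝ) :
    HasDerivAt (fun s => mexp θ d s h)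
      (mexp θ d s (fun a => d a * h a) - mexp θ d s d * mexp θ d s h) s := by
  have : HasDerivAt (fun s => mexp θ d s h) (∑ a, softmax (fun i => θ i + s * d i) a * (d a - mexp θ d s d) * h a) s := HasDerivAt.fun_sum (fun a (_ : a ∈ Finset.univ) =>
    (hasDerivAt_softmax θ d a s).mul_const (h a))
  convert this using 1
  rw [mexp, mexp, mexp]
  rw [Finset.mul_sum, ← Finset.sum_sub_distrib]
  congr 1
  ext a
  ring

/-- first derivative of `s ↦ mexp θ d s r` -/
noncomputable def g1 (θ d r : Fin K → ℝ) (s : ℝ) : ℝ :=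
  mexp θ d s (fun a => d a * r a) - mexp θ d s d * mexp θ d s r

noncomputable def g2 (θ d r : Fin K → ℝ) (s : ℝ) : ℝ :=
  (mexp θ d s (fun a => d a * (d a * r a))
    - mexp θ d s d * mexp θ d s (fun a => d a * r a))
  - ((mexp θ d s (fun a => d a * d a) - mexp θ d s d * mexp θ d s d) * mexp θ d s r
    + mexp θ d s d * (mexp θ d s (fun a => d a * r a) - mexp θ d s d * mexp θ d s r))

lemma hasDerivAt_g1 [NeZero K] (θ d r : Fin K → ℝ) (s : ℝ) :
    HasDerivAt (fun s => g1 θ d r s) (g2 θ d r s) s :=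
  ((hasDerivAt_mexp θ d (fun a => d a * r a) s).sub
    ((hasDerivAt_mexp θ d d s).mul (hasDerivAt_mexp θ d r s)))

lemma mexp_nonneg [NeZero K] (θ d : Fin K → ℝ) (s : ℝ) (h : Fin K → ℝ)
    (hh : ∀ a, 0 ≤ h a) : 0 ≤ mexp θ d s h :=
  Finset.sum_nonneg (fun a _ => mul_nonneg (softmax_pos _ a).le (hh a))

lemma mexp_le [NeZero K] (θ d : Fin K → ℝ) (s : ℝ) (h h' : Fin K → ℝ)
    (hh : ∀ a, h a ≤ h' a) : mexp θ d s h ≤ mexp θ d s h' :=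
  Finset.sum_le_sum (fun a _ => mul_le_mul_of_nonneg_left (hh a) (softmax_pos _ a).le)

lemma mexp_one [NeZero K] (θ d : Fin K → ℝ) (s : ℝ) :
    mexp θ d s (fun _ => 1) = 1 := by
  simp only [mexp, mul_one]; exact softmax_sum _

lemma abs_g2_le [NeZero K] (θ d r : Fin K → ℝ) (s : ℝ)
    (hr : ∀ a, 0 < r a ∧ r a ≤ 1) :
    |g2 θ d r s| ≤ ∑ a, d a ^ 2 := by
  set Ed := mexp θ d s d with hEd
  have hA : mexp θ d s (fun a => (d a - Ed)^2 * r a)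
      = mexp θ d s (fun a => d a * (d a * r a)) - 2*Ed*mexp θ d s (fun a => d a * r a)
        + Ed^2 * mexp θ d s r := by
    simp only [mexp, Finset.mul_sum, ← Finset.sum_sub_distrib, ← Finset.sum_add_distrib]
    exact Finset.sum_congr rfl (fun a _ => by ring)
  have hV : mexp θ d s (fun a => (d a - Ed)^2)
      = mexp θ d s (fun a => d a * d a) - Ed^2 := by
    have h1 : mexp θ d s (fun a => (d a - Ed)^2)
        = mexp θ d s (fun a => d a * d a) - 2*Ed*mexp θ d s d
          + Ed^2 * mexp θ d s (fun _ => 1) := by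
      simp only [mexp, Finset.mul_sum, ← Finset.sum_sub_distrib, ← Finset.sum_add_distrib]
      exact Finset.sum_congr rfl (fun a _ => by ring)
    rw [h1, mexp_one, ← hEd]; ring
  have hg2 : g2 θ d r s
      = mexp θ d s (fun a => (d a - Ed)^2 * r a)
        - (mexp θ d s (fun a => d a * d a) - Ed^2) * mexp θ d s r := by
    rw [hA, g2, ← hEd]; ring
  set V := mexp θ d s (fun a => (d a - Ed)^2) with hVdef
  have hVnn : 0 ≤ V := mexp_nonneg _ _ _ _ (fun a => sq_nonneg _)
  have hAnn : 0 ≤ mexp θ d s (fun a => (d a - Ed)^2 * r a) :=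
    mexp_nonneg _ _ _ _ (fun a => mul_nonneg (sq_nonneg _) (hr a).1.le)
  have hAle : mexp θ d s (fun a => (d a - Ed)^2 * r a) ≤ V := by
    apply mexp_le
    intro a
    calc (d a - Ed)^2 * r a ≤ (d a - Ed)^2 * 1 :=
          mul_le_mul_of_nonneg_left (hr a).2 (sq_nonneg _)
      _ = (d a - Ed)^2 := mul_one _
  have hErnn : 0 ≤ mexp θ d s r := mexp_nonneg _ _ _ _ (fun a => (hr a).1.le)
  have hErle : mexp θ d s r ≤ 1 := by
    calc mexp θ d s r ≤ mexp θ d s (fun _ => 1) := mexp_le _ _ _ _ _ (fun a => (hr a).2)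
      _ = 1 := mexp_one _ _ _
  have hBnn : 0 ≤ (mexp θ d s (fun a => d a * d a) - Ed^2) * mexp θ d s r := by
    apply mul_nonneg _ hErnn
    rw [← hV]; exact hVnn
  have hBle : (mexp θ d s (fun a => d a * d a) - Ed^2) * mexp θ d s r ≤ V := by
    rw [← hV]
    calc V * mexp θ d s r ≤ V * 1 := mul_le_mul_of_nonneg_left hErle hVnn
      _ = V := mul_one _
  have habs : |g2 θ d r s| ≤ V := by
    rw [hg2, abs_le]
    constructor <;> nlinarith
  have hVle : V ≤ ∑ a, d a ^ 2 := by
    rw [hV]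
    have h1 : mexp θ d s (fun a => d a * d a) ≤ ∑ a, d a ^ 2 := by
      rw [mexp]
      apply Finset.sum_le_sum
      intro a _
      calc softmax _ a * (d a * d a) ≤ 1 * (d a * d a) :=
            mul_le_mul_of_nonneg_right (softmax_le_one _ a) (mul_self_nonneg _)
        _ = d a ^ 2 := by ring
    nlinarith [sq_nonneg Ed]
  linarith

lemma g1_lip [NeZero K] (θ d r : Fin K → ℝ) (hr : ∀ a, 0 < r a ∧ r a ≤ 1) (s : ℝ) :
    |g1 θ d r s - g1 θ d r 0| ≤ (∑ a, d a ^ 2) * |s| := by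
  have h := Convex.norm_image_sub_le_of_norm_hasDerivWithin_le
    (f := fun s => g1 θ d r s) (f' := fun s => g2 θ d r s) (C := ∑ a, d a ^ 2)
    (s := Set.univ) (fun x _ => (hasDerivAt_g1 θ d r x).hasDerivWithinAt)
    (fun x _ => by simpa [Real.norm_eq_abs] using abs_g2_le θ d r x hr)
    convex_univ (Set.mem_univ 0) (Set.mem_univ s)
  simpa [Real.norm_eq_abs] using h

lemma descent_lemma [NeZero K] (θ d r : Fin K → ℝ) (hr : ∀ a, 0 < r a ∧ r a ≤ 1) :
    mexp θ d 0 r + g1 θ d r 0 - (∑ a, d a ^ 2) / 2 ≤ mexp θ d 1 r := by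
  set M := ∑ a, d a ^ 2 with hM
  have hMnn : 0 ≤ M := Finset.sum_nonneg (fun a _ => sq_nonneg _)
  set h : ℝ → ℝ := fun s => mexp θ d s r - s * g1 θ d r 0 + s^2 * M / 2 with hh
  have hderiv : ∀ s : ℝ, HasDerivAt h (g1 θ d r s - g1 θ d r 0 + s * M) s := by
    intro s
    have h1 : HasDerivAt (fun s => mexp θ d s r) (g1 θ d r s) s := hasDerivAt_mexp θ d r s
    have h2 : HasDerivAt (fun s : ℝ => s * g1 θ d r 0) (g1 θ d r 0) s := by
      simpa using hasDerivAt_mul_const (g1 θ d r 0)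
    have h3 : HasDerivAt (fun s : ℝ => s^2 * M / 2) (s * M) s := by
      have : HasDerivAt (fun s : ℝ => s^2 * M / 2) (((2:ℕ):ℝ) * s ^ (2 - 1) * M / 2) s := ((hasDerivAt_pow 2 s).mul_const M).div_const 2
      convert this using 1
      ring
    exact (h1.sub h2).add h3
  have hmono : MonotoneOn h (Set.Icc (0:ℝ) 1) := by
    apply monotoneOn_of_deriv_nonneg (convex_Icc 0 1)
    · exact fun x _ => ((hderiv x).continuousAt.continuousWithinAt)
    · intro x hx
      exact ((hderiv x).differentiableAt.differentiableWithinAt)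
    · intro x hx
      rw [(hderiv x).deriv]
      rw [interior_Icc] at hx
      have hx0 : 0 < x := hx.1
      have := g1_lip θ d r hr x
      rw [abs_le] at this
      have habs : |x| = x := abs_of_pos hx0
      rw [habs] at this
      nlinarith [this.1]
  have := hmono (Set.mem_Icc.mpr ⟨le_refl 0, zero_le_one⟩)
    (Set.mem_Icc.mpr ⟨zero_le_one, le_refl 1⟩) zero_le_one
  simp only [hh] at this
  norm_num at this
  linarith


lemma one_step [NeZero K] (r θ : Fin K → ℝ) (hr : ∀ a, 0 < r a ∧ r a ≤ 1) :
    expReward r θ + (1/5) * ∑ a, (pgrad r θ a) ^ 2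
      ≤ expReward r (fun a => θ a + (2/5) * pgrad r θ a) := by
  set d : Fin K → ℝ := fun a => (2/5) * pgrad r θ a with hd
  have h0 : mexp θ d 0 r = expReward r θ := by
    rw [mexp, expReward]
    simp
  have h1 : mexp θ d 1 r = expReward r (fun a => θ a + (2/5) * pgrad r θ a) := by
    rw [mexp, expReward]
    simp [hd]
  have hEr : mexp θ d 0 r = expReward r θ := h0
  have hsm0 : ∀ h' : Fin K → ℝ, mexp θ d 0 h' = ∑ a, softmax θ a * h' a := by
    intro h'
    rw [mexp]
    simp
  have hg1 : g1 θ d r 0 = (2/5) * ∑ a, (pgrad r θ a) ^ 2 := by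
    rw [g1, hsm0, hsm0, h0]
    rw [Finset.sum_mul, Finset.mul_sum, ← Finset.sum_sub_distrib]
    apply Finset.sum_congr rfl
    intro a _
    simp only [hd, pgrad]
    ring
  have hM : ∑ a, d a ^ 2 = (4/25) * ∑ a, (pgrad r θ a) ^ 2 := by
    rw [Finset.mul_sum]
    apply Finset.sum_congr rfl
    intro a _
    simp only [hd]
    ring
  have hS : 0 ≤ ∑ a, (pgrad r θ a) ^ 2 := Finset.sum_nonneg (fun a _ => sq_nonneg _)
  have := descent_lemma θ d r hr
  rw [h0, h1, hg1, hM] at this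
  linarith

-- gap bounds
lemma gap_nonneg [NeZero K] (r θ : Fin K → ℝ) (astar : Fin K)
    (hstar' : ∀ a, r a ≤ r astar) : 0 ≤ r astar - expReward r θ := by
  have h : expReward r θ ≤ r astar := by
    calc expReward r θ ≤ ∑ a, softmax θ a * r astar :=
          Finset.sum_le_sum (fun a _ =>
            mul_le_mul_of_nonneg_left (hstar' a) (softmax_pos θ a).le)
      _ = r astar := by rw [← Finset.sum_mul, softmax_sum, one_mul]
  linarith

lemma gap_le_one [NeZero K] (r θ : Fin K → ℝ) (astar : Fin K)
    (hr : ∀ a, 0 < r a ∧ r a ≤ 1) : r astar - expReward r θ ≤ 1 := by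
  have h : 0 ≤ expReward r θ :=
    Finset.sum_nonneg (fun a _ => mul_nonneg (softmax_pos θ a).le (hr a).1.le)
  have := (hr astar).2
  linarith

-- Łojasiewicz
lemma lojasiewicz [NeZero K] (r θ : Fin K → ℝ) (astar : Fin K) :
    (softmax θ astar) ^ 2 * (r astar - expReward r θ) ^ 2 ≤ ∑ a, (pgrad r θ a) ^ 2 := by
  have h : (pgrad r θ astar) ^ 2 = (softmax θ astar) ^ 2 * (r astar - expReward r θ) ^ 2 := by
    rw [pgrad]; ring
  rw [← h]
  exact Finset.single_le_sum (f := fun a => (pgrad r θ a) ^ 2)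
    (fun a _ => sq_nonneg _) (Finset.mem_univ astar)

-- softmax as inverse of sum of exp differences
lemma softmax_eq_inv [NeZero K] (θ : Fin K → ℝ) (b : Fin K) :
    softmax θ b = (∑ a, Real.exp (θ a - θ b))⁻¹ := by
  have h : ∑ a, Real.exp (θ a - θ b) = (∑ a, Real.exp (θ a)) / Real.exp (θ b) := by
    rw [Finset.sum_div]
    exact Finset.sum_congr rfl (fun a _ => Real.exp_sub _ _)
  rw [softmax, h, inv_div]

lemma pgrad_star_max [NeZero K] (r θ : Fin K → ℝ) (astar : Fin K)
    (hstar' : ∀ a, r a ≤ r astar) (hθ : ∀ a, θ a ≤ θ astar) (a : Fin K) :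
    pgrad r θ a ≤ pgrad r θ astar := by
  have hgap := gap_nonneg r θ astar hstar'
  have hπ : softmax θ a ≤ softmax θ astar := by
    rw [softmax, softmax]
    gcongr
    exact hθ a
  rw [pgrad, pgrad]
  rcases le_or_gt (r a) (expReward r θ) with hcase | hcase
  · have h1 : softmax θ a * (r a - expReward r θ) ≤ 0 :=
      mul_nonpos_of_nonneg_of_nonpos (softmax_pos θ a).le (by linarith)
    have h2 : 0 ≤ softmax θ astar * (r astar - expReward r θ) :=
      mul_nonneg (softmax_pos θ astar).le hgap
    linarith
  · exact mul_le_mul hπ (by linarith [hstar' a]) (by linarith) (softmax_pos θ astar).le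

lemma rec_bound (u x : ℝ) (t : ℕ) (hu0 : 0 < u) (hu1 : u ≤ 1) (hx0 : 0 ≤ x) (hx1 : x ≤ 1)
    (hxB : x ≤ 5 / (u * ((t:ℝ)+1))) :
    x - (1/5) * u * x^2 ≤ 5 / (u * ((t:ℝ)+2)) := by
  have ht : (0:ℝ) ≤ (t:ℝ) := Nat.cast_nonneg t
  have hden1 : (0:ℝ) < u * ((t:ℝ)+1) := by positivity
  have hden2 : (0:ℝ) < u * ((t:ℝ)+2) := by positivity
  have hxB' : x * (u * ((t:ℝ)+1)) ≤ 5 := by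
    rw [le_div_iff₀ hden1] at hxB; linarith
  rw [le_div_iff₀ hden2]
  have hux : u * x ≤ 1 := by nlinarith
  by_cases hcase : 5 ≤ u * ((t:ℝ)+1)
  · nlinarith [mul_nonneg (sub_nonneg.2 hxB') (sub_nonneg.2 hux),
      mul_nonneg (sub_nonneg.2 hxB') (sub_nonneg.2 hcase),
      mul_nonneg (sub_nonneg.2 hux) (sub_nonneg.2 hcase),
      mul_nonneg (mul_nonneg hx0 hu0.le) ht, sq_nonneg (x*u*((t:ℝ)+1) - 5)]
  · push_neg at hcase
    nlinarith [mul_nonneg (sub_nonneg.2 hx1) (sub_nonneg.2 hux),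
      mul_nonneg hu0.le (sub_nonneg.2 hx1), sq_nonneg u, sq_nonneg (u*x),
      mul_nonneg (mul_nonneg hu0.le hu0.le) (sub_nonneg.2 hx1)]



/-- Softmax PG upper bound with exact gradients, learning rate `2/5`.
Here `θ 0` is the paper's `θ_1`, so the paper's `θ_t` is `θ (t-1)` and the
rate `5/(c²·t)` becomes `5/(c²·(t+1))`. If `c = inf_t π_{θ_t}(a*) > 0` then
`(π* − π_{θ_t})ᵀ r ≤ 5/(c²·t)`; with uniform initialization `π_{θ_t}(a*)` is
non-decreasing, `c ≥ 1/K`, and `(π* − π_{θ_t})ᵀ r ≤ 5K²/t`. -/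
theorem softmax_pg_true_gradient_upper_bound
    {K : ℕ} (hK : 2 ≤ K) (r : Fin K → ℝ)
    (hr : ∀ a, 0 < r a ∧ r a ≤ 1)
    (astar : Fin K) (hstar : ∀ a, a ≠ astar → r a < r astar)
    (θ : ℕ → Fin K → ℝ)
    (hupd : ∀ t, θ (t + 1) = fun a => θ t a + (2 / 5) * pgrad r (θ t) a)
    (c : ℝ) (hc : c = ⨅ t : ℕ, softmax (θ t) astar) :
    (0 < c →
      ∀ t : ℕ, r astar - expReward r (θ t) ≤ 5 / (c ^ 2 * ((t : ℝ) + 1))) ∧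
    ((∀ a, softmax (θ 0) a = 1 / K) →
      (∀ t, softmax (θ t) astar ≤ softmax (θ (t + 1)) astar) ∧
      1 / (K : ℝ) ≤ c ∧
      ∀ t : ℕ, r astar - expReward r (θ t) ≤ 5 * (K : ℝ) ^ 2 / ((t : ℝ) + 1)) := by
  haveI : NeZero K := ⟨by omega⟩
  have hK0 : (0:ℝ) < (K:ℝ) := by
    have : 0 < K := by omega
    exact_mod_cast this
  have hstar' : ∀ a, r a ≤ r astar := by
    intro a
    by_cases h : a = astar
    · subst h; exact le_refl _
    · exact (hstar a h).le
  have hbdd : BddBelow (Set.range fun t => softmax (θ t) astar) := by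
    refine ⟨0, ?_⟩
    rintro x ⟨t, rfl⟩
    exact (softmax_pos _ _).le
  have hcle : ∀ t, c ≤ softmax (θ t) astar := by
    intro t
    rw [hc]
    exact ciInf_le hbdd t
  have hrec : ∀ t, r astar - expReward r (θ (t+1))
      ≤ (r astar - expReward r (θ t))
        - (1/5) * (softmax (θ t) astar)^2 * (r astar - expReward r (θ t))^2 := by
    intro t
    rw [hupd t]
    have h1 := one_step r (θ t) hr
    have h2 := lojasiewicz r (θ t) astar
    linarith
  have part1 : 0 < c →
      ∀ t : ℕ, r astar - expReward r (θ t) ≤ 5 / (c ^ 2 * ((t : ℝ) + 1)) := by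
    intro hcpos
    have hc1 : c ≤ 1 := le_trans (hcle 0) (softmax_le_one _ _)
    have hu0 : 0 < c^2 := by positivity
    have hu1 : c^2 ≤ 1 := by nlinarith
    intro t
    induction t with
    | zero =>
      have h1 := gap_le_one r (θ 0) astar hr
      have h0 := gap_nonneg r (θ 0) astar hstar'
      push_cast
      rw [le_div_iff₀ (by positivity)]
      nlinarith
    | succ t ih =>
      have hgap0 := gap_nonneg r (θ t) astar hstar'
      have hgap1 := gap_le_one r (θ t) astar hr
      have hπ := hcle t
      have hπ2 : c^2 ≤ (softmax (θ t) astar)^2 := by nlinarith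
      have key := hrec t
      have step : r astar - expReward r (θ (t+1))
          ≤ (r astar - expReward r (θ t)) - (1/5) * c^2 * (r astar - expReward r (θ t))^2 := by
        nlinarith [sq_nonneg (r astar - expReward r (θ t))]
      have hrb := rec_bound (c^2) (r astar - expReward r (θ t)) t hu0 hu1 hgap0 hgap1 ih
      push_cast
      have heq : c ^ 2 * ((t:ℝ) + 1 + 1) = c ^ 2 * ((t:ℝ) + 2) := by ring
      rw [heq]
      linarith
  refine ⟨part1, ?_⟩
  intro huni
  have hS := sumexp_pos (θ 0)
  have hθ0 : ∀ a, θ 0 a ≤ θ 0 astar := by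
    intro a
    have hval : ∀ b, Real.exp (θ 0 b) = (∑ a', Real.exp (θ 0 a')) * (1/K) := by
      intro b
      have hb := huni b
      rw [softmax, div_eq_iff hS.ne'] at hb
      rw [hb]; ring
    have h1 : Real.exp (θ 0 a) = Real.exp (θ 0 astar) := by rw [hval a, hval astar]
    exact le_of_eq (Real.exp_eq_exp.mp h1)
  have hinv : ∀ t, ∀ a, θ t a ≤ θ t astar := by
    intro t
    induction t with
    | zero => exact hθ0
    | succ t ih =>
      intro a
      rw [hupd t]
      have h1 := pgrad_star_max r (θ t) astar hstar' ih a
      have h2 := ih a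
      dsimp only
      linarith
  have hmonostep : ∀ t, softmax (θ t) astar ≤ softmax (θ (t+1)) astar := by
    intro t
    rw [hupd t, softmax_eq_inv, softmax_eq_inv]
    have hpos : (0:ℝ) < ∑ a, Real.exp ((θ t a + 2/5 * pgrad r (θ t) a)
        - (θ t astar + 2/5 * pgrad r (θ t) astar)) :=
      Finset.sum_pos (fun a _ => Real.exp_pos _) ⟨astar, Finset.mem_univ _⟩
    apply inv_anti₀ hpos
    apply Finset.sum_le_sum
    intro a _
    apply Real.exp_le_exp.mpr
    have h1 := pgrad_star_max r (θ t) astar hstar' (hinv t) a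
    linarith
  have hlb : ∀ t, 1/(K:ℝ) ≤ softmax (θ t) astar := by
    intro t
    induction t with
    | zero => rw [huni astar]
    | succ t ih => exact le_trans ih (hmonostep t)
  have hclb : 1/(K:ℝ) ≤ c := by
    rw [hc]
    exact le_ciInf hlb
  refine ⟨hmonostep, hclb, ?_⟩
  have hcpos : 0 < c := lt_of_lt_of_le (by positivity) hclb
  intro t
  have h1 := part1 hcpos t
  have hcK : 1 ≤ c * (K:ℝ) := (div_le_iff₀ hK0).mp hclb
  have h2 : 5 / (c^2 * ((t:ℝ)+1)) ≤ 5 * (K:ℝ)^2 / ((t:ℝ)+1) := by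
    have ht : (0:ℝ) ≤ (t:ℝ) := Nat.cast_nonneg t
    rw [div_le_div_iff₀ (by positivity) (by positivity)]
    have h3 : 1 ≤ c^2 * (K:ℝ)^2 := by nlinarith
    nlinarith [mul_le_mul_of_nonneg_left h3 (show (0:ℝ) ≤ 5*((t:ℝ)+1) by positivity)]
  linarith
end
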